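/- arXiv:0801.1060 — 2 statements merged into one kernel-verified Lean document; each statement's English description precedes it below -/
import Mathlib

section
/- For any j ≥ 0, the periodic bi-infinite sequence w = (0^{2^{j+1}−1} 1)^∞ (repeating the block of 2^{j+1}−1 zeros followed by a one) belongs to the PFT X_{2^{j+1}}. -/
/-- The sliding-block map ψ on binary words: ψ(u₁…uₙ) = u*₁…u*ₙ₋₁ with u*ᵢ = uᵢ + uᵢ₊₁ (mod 2). -/
def psiW : List (ZMod 2) → List (ZMod 2)
  | a :: b :: rest => (a + b) :: psiW (b :: rest)
  | _ => []

/-- The forbidden sets: F 1 = {0}, F (k+1) = ψ⁻¹(F k). -/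
def F : ℕ → Set (List (ZMod 2))
  | 0 => ∅
  | 1 => {[(0 : ZMod 2)]}
  | (k + 1) => psiW ⁻¹' F k

/-- ψ on bi-infinite binary sequences. -/
def psiZ (x : ℤ → ZMod 2) : ℤ → ZMod 2 := fun i => x i + x (i + 1)

/-- Length-`k` subword of `x` starting at index `i`. -/
def subword (x : ℤ → ZMod 2) (i : ℤ) (k : ℕ) : List (ZMod 2) :=
  (List.range k).map fun t => x (i + t)

/-- Membership in the PFT X_k: for some shift r ∈ {0,1}, no subword of σʳ(x) starting at an
even index belongs to F k. -/
def inX (k : ℕ) (x : ℤ → ZMod 2) : Prop :=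
  ∃ r : ℕ, r < 2 ∧ ∀ i : ℤ, Even i → subword x (i + r) k ∉ F k

/-- one step of the "add shifted copy" map -/
def D (m : ℕ) (w : List (ZMod 2)) : List (ZMod 2) :=
  List.zipWith (· + ·) w (w.drop m)

lemma psiW_eq (w : List (ZMod 2)) : psiW w = D 1 w := by
  induction w with
  | nil => rfl
  | cons a t ih =>
    cases t with
    | nil => rfl
    | cons b r => simp [psiW, D, List.zipWith] at ih ⊢; exact ih

lemma D_length (m : ℕ) (w : List (ZMod 2)) : (D m w).length = w.length - m := by
  simp [D]

lemma psiW_length (w : List (ZMod 2)) : (psiW w).length = w.length - 1 := by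
  rw [psiW_eq, D_length]

lemma D_D (m : ℕ) (w : List (ZMod 2)) : D m (D m w) = D (2 * m) w := by
  apply List.ext_getElem
  · simp [D_length]; omega
  · intro i h1 h2
    simp only [D, List.getElem_zipWith, List.getElem_drop]
    ring_nf
    rw [show (2 : ZMod 2) = 0 from rfl, mul_zero, add_zero]

lemma psiW_pow (k : ℕ) (w : List (ZMod 2)) : psiW^[2 ^ k] w = D (2 ^ k) w := by
  induction k generalizing w with
  | zero => simpa using psiW_eq w
  | succ k ih =>
    rw [pow_succ, mul_comm, two_mul, Function.iterate_add_apply, ih, ih, D_D, two_mul]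

lemma F_succ (n : ℕ) (hn : 1 ≤ n) : F (n + 1) = psiW ⁻¹' (F n) := by
  rcases n with _ | n
  · omega
  · rfl

lemma F_iter (b a : ℕ) (ha : 1 ≤ a) (w : List (ZMod 2)) :
    w ∈ F (a + b) ↔ psiW^[b] w ∈ F a := by
  induction b generalizing w with
  | zero => simp
  | succ b ih =>
    rw [show a + (b + 1) = (a + b) + 1 by omega, F_succ _ (by omega)]
    simp only [Set.mem_preimage]
    rw [ih, Function.iterate_succ_apply]

lemma F_length : ∀ (k : ℕ) (w : List (ZMod 2)), w ∈ F k → w.length = k := by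
  intro k
  induction k using Nat.strong_induction_on with
  | _ k ih =>
    rcases k with _ | _ | k
    · intro w h; exact absurd h (by simp [F])
    · intro w h; simp [F] at h; simp [h]
    · intro w h
      rw [F_succ _ (by omega)] at h
      have := ih (k + 1) (by omega) _ h
      have := psiW_length w
      omega

lemma sum_zipWith : ∀ (b a : List (ZMod 2)), b.length ≤ a.length →
    (List.zipWith (· + ·) a b).sum = (a.take b.length).sum + b.sum := by
  intro b
  induction b with
  | nil => simp
  | cons x xs ih =>
    intro a ha
    cases a with
    | nil => simp at ha
    | cons y ys =>
      simp only [List.zipWith, List.sum_cons, List.take, List.length_cons, List.take_succ_cons, ih ys (by simpa using ha)]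
      ring

lemma D_sum (m : ℕ) (w : List (ZMod 2)) (hw : w.length = 2 * m) :
    (D m w).sum = w.sum := by
  have hd : (w.drop m).length = m := by simp; omega
  rw [D, sum_zipWith _ _ (by simp), hd]
  conv_rhs => rw [← List.take_append_drop m w]
  rw [List.sum_append]

lemma F_parity : ∀ (m : ℕ) (w : List (ZMod 2)), w ∈ F (2 ^ m) → w.sum = 0 := by
  intro m
  induction m with
  | zero => intro w h; simp [F] at h; simp [h]
  | succ m ih =>
    intro w h
    have hl : w.length = 2 ^ (m + 1) := F_length _ _ h
    have h2 : psiW^[2 ^ m] w ∈ F (2 ^ m) := by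
      have e : (2:ℕ) ^ (m + 1) = 2 ^ m + 2 ^ m := by ring
      rw [e] at h
      exact (F_iter _ _ Nat.one_le_two_pow w).mp h
    rw [psiW_pow] at h2
    have := ih _ h2
    rwa [D_sum _ _ (by rw [hl]; ring)] at this

lemma subword_sum (x : ℤ → ZMod 2) (i : ℤ) (k : ℕ) :
    (subword x i k).sum = ∑ t ∈ Finset.range k, x (i + t) := by
  rw [subword]
  simp only [bind_pure_comp, List.map_eq_map, List.map_map]
  exact rfl

/-- the periodic sequence (0^{2^{j+1}−1} 1)^∞ belongs to X_{2^{j+1}}. -/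
theorem stmt_14 (j : ℕ) :
    inX (2 ^ (j + 1))
      (fun i : ℤ => if i % (2 ^ (j + 1) : ℤ) = (2 ^ (j + 1) : ℤ) - 1 then 1 else 0) := by
  refine ⟨0, by norm_num, ?_⟩
  intro i _ h
  simp only [Nat.cast_zero, add_zero] at h
  set k : ℕ := 2 ^ (j + 1) with hk
  set K : ℤ := 2 ^ (j + 1) with hKdef
  have hKk : K = (k : ℤ) := by push_cast [hk]; rfl
  have hK : 0 < K := by positivity
  have hK2 : 2 ≤ K := by rw [hKdef]; calc (2:ℤ) = 2^1 := by norm_num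
                                           _ ≤ 2^(j+1) := by apply pow_le_pow_right₀ <;> omega
  set m : ℤ := (K - 1 - i) % K with hmdef
  have hm0 : 0 ≤ m := Int.emod_nonneg _ (ne_of_gt hK)
  have hmK : m < K := Int.emod_lt_of_pos _ hK
  have hsum0 := F_parity (j + 1) _ h
  rw [subword_sum] at hsum0
  have hcond : ∀ t ∈ Finset.range k,
      (if (i + (t:ℤ)) % K = K - 1 then (1 : ZMod 2) else 0)
        = (if t = m.toNat then (1 : ZMod 2) else 0) := by
    intro t ht
    simp only [Finset.mem_range] at ht
    have htK : (t : ℤ) < K := by rw [hKk]; exact_mod_cast ht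
    congr 1
    apply propext
    constructor
    · intro hc
      have e1 : ((i + t) % K - i) % K = ((i + t) - i) % K := by
        conv_rhs => rw [Int.sub_emod]
        rw [Int.sub_emod, Int.emod_emod_of_dvd _ dvd_rfl]
      have e2 : m = (t : ℤ) := by
        rw [hmdef, show K - 1 - i = (K - 1) - i from rfl, ← hc, e1,
          show i + (t:ℤ) - i = (t:ℤ) by ring, Int.emod_eq_of_lt (by positivity) htK]
      omega
    · intro hc
      have htm : (t : ℤ) = m := by omega
      rw [htm, hmdef, Int.add_emod, Int.emod_emod_of_dvd _ dvd_rfl, ← Int.add_emod,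
        show i + (K - 1 - i) = K - 1 by ring, Int.emod_eq_of_lt (by omega) (by omega)]
  rw [Finset.sum_congr rfl hcond, Finset.sum_ite_eq' (Finset.range k) m.toNat fun _ => (1 : ZMod 2)]
    at hsum0
  have hmem : m.toNat ∈ Finset.range k := by
    simp only [Finset.mem_range]
    omega
  rw [if_pos hmem] at hsum0
  exact one_ne_zero hsum0
end

section
/- The smallest period of any periodic bi-infinite sequence in X_k (the sequential period T_seq) equals 1 for k = 1, and equals 2^{j+1} for k ≥ 2 where j ≥ 0 is the unique integer with 2^j + 1 ≤ k ≤ 2^{j+1}. -/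
/-- The set of (positive) periods of periodic bi-infinite sequences in X_k. -/
def periodSet (k : ℕ) : Set ℕ :=
  {p | 0 < p ∧ ∃ x : ℤ → ZMod 2, inX k x ∧ ∀ i : ℤ, x (i + p) = x i}

/-! ### Auxiliary definitions and lemmas -/

def Per (p : ℕ) (x : ℤ → ZMod 2) : Prop := ∀ i : ℤ, x (i + p) = x i

def dec (x : ℤ → ZMod 2) : ℤ → ZMod 2 := fun i => x (2*i)

lemma zmod2_eq_one : ∀ {a : ZMod 2}, a ≠ 0 → a = 1 := by decide

lemma per_psiZ {p : ℕ} {x} (h : Per p x) : Per p (psiZ x) := by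
  intro i
  have h2 := h (i + 1)
  simp only [psiZ]
  rw [show i + (p:ℤ) + 1 = i + 1 + p by ring, h i, h2]

lemma per_iter {p : ℕ} {x} (h : Per p x) (m : ℕ) : Per p (psiZ^[m] x) := by
  induction m with
  | zero => exact h
  | succ n ih => rw [Function.iterate_succ_apply']; exact per_psiZ ih

lemma sum_step {p : ℕ} {x} (h : Per p x) (hp : 0 < p) (c : ℤ) :
    ∑ i ∈ Finset.range p, x (c + 1 + i) = ∑ i ∈ Finset.range p, x (c + i) := by
  obtain ⟨q, rfl⟩ := Nat.exists_eq_succ_of_ne_zero hp.ne'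
  rw [Finset.sum_range_succ, Finset.sum_range_succ']
  congr 1
  · apply Finset.sum_congr rfl
    intro i _
    congr 1
    push_cast; ring
  · have := h c
    rw [show c + 1 + (q:ℕ) = c + ((q:ℕ)+1 : ℕ) by push_cast; ring]
    simpa using this

lemma sum_shift {p : ℕ} {x} (h : Per p x) (c : ℤ) :
    ∑ i ∈ Finset.range p, x (c + i) = ∑ i ∈ Finset.range p, x (i : ℕ) := by
  rcases Nat.eq_zero_or_pos p with rfl | hp
  · simp
  · induction c using Int.induction_on with
    | zero => simp
    | succ n ih => rw [sum_step h hp n, ih]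
    | pred n ih => rw [← ih, ← sum_step h hp (-(n:ℤ) - 1)]; norm_num

lemma sum_psiZ {p : ℕ} {x} (h : Per p x) :
    ∑ i ∈ Finset.range p, psiZ x (i : ℕ) = 0 := by
  simp only [psiZ, Finset.sum_add_distrib]
  have h1 : ∑ i ∈ Finset.range p, x ((i:ℕ) + 1) = ∑ i ∈ Finset.range p, x (i:ℕ) := by
    rw [← sum_shift h 1]
    apply Finset.sum_congr rfl; intro i _; congr 1; ring
  rw [h1]
  have : ∀ a : ZMod 2, a + a = 0 := by decide
  exact this _

lemma two_dvd_per {p m : ℕ} {w} (hp : 0 < p) (h : Per p w)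
    (h1 : ∀ i : ℤ, psiZ^[m+1] w i = 1) : 2 ∣ p := by
  have hs : ∑ i ∈ Finset.range p, psiZ^[m+1] w (i:ℕ) = 0 := by
    have := sum_psiZ (per_iter h m)
    simpa [Function.iterate_succ_apply'] using this
  simp only [h1, Finset.sum_const, Finset.card_range, nsmul_eq_mul, mul_one] at hs
  exact (ZMod.natCast_eq_zero_iff p 2).mp hs

lemma psiZ_psiZ (x : ℤ → ZMod 2) : psiZ (psiZ x) = fun i => x i + x (i + 2) := by
  funext i
  have e : i + 1 + 1 = i + 2 := by ring
  simp only [psiZ, e]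
  have h : x (i+1) + x (i+1) = 0 := by
    have : ∀ a : ZMod 2, a + a = 0 := by decide
    exact this _
  linear_combination h

lemma dec_iter (m : ℕ) (x : ℤ → ZMod 2) (i : ℤ) :
    psiZ^[m] (dec x) i = psiZ^[2*m] x (2*i) := by
  induction m generalizing x i with
  | zero => simp [dec]
  | succ n ih =>
    have h2 : psiZ^[2*(n+1)] x = psiZ^[2*n] (psiZ (psiZ x)) := by
      rw [show 2*(n+1) = 2*n + 2 by ring, Function.iterate_add_apply]
      rfl
    rw [h2, ← ih (psiZ (psiZ x)) i]
    rw [Function.iterate_succ_apply]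
    have he : psiZ (dec x) = dec (psiZ (psiZ x)) := by
      funext t
      rw [psiZ_psiZ]
      show dec x t + dec x (t+1) = x (2*t) + x (2*t + 2)
      show x (2*t) + x (2*(t+1)) = x (2*t) + x (2*t + 2)
      rw [show 2*(t+1) = 2*t+2 by ring]
    rw [he]

lemma decim (m e : ℕ) (w : ℤ → ZMod 2) (i : ℤ) :
    psiZ^[m] (dec (psiZ^[e] w)) i = psiZ^[2*m+e] w (2*i) := by
  rw [dec_iter, Function.iterate_add_apply]

lemma iter_pow (a : ℕ) (x : ℤ → ZMod 2) (i : ℤ) :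
    psiZ^[2^a] x i = x i + x (i + 2^a) := by
  induction a generalizing x i with
  | zero => simp [psiZ]
  | succ n ih =>
    rw [show (2:ℕ)^(n+1) = 2^n + 2^n by ring, Function.iterate_add_apply, ih, ih, ih]
    have e : i + (2:ℤ)^n + 2^n = i + 2^(n+1) := by ring
    rw [e]
    have h : x (i + 2^n) + x (i + 2^n) = 0 := by
      have : ∀ a : ZMod 2, a + a = 0 := by decide
      exact this _
    linear_combination h

lemma iter_window (a : ℕ) (x : ℤ → ZMod 2) (i : ℤ) :
    psiZ^[2^a - 1] x i = ∑ t ∈ Finset.range (2^a), x (i + t) := by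
  induction a generalizing x i with
  | zero => simp
  | succ n ih =>
    have h1 : (2:ℕ)^(n+1) - 1 = 2^n + (2^n - 1) := by
      have := Nat.one_le_two_pow (n := n); omega
    rw [h1, Function.iterate_add_apply, iter_pow, ih, ih]
    have h2 : (2:ℕ)^(n+1) = 2^n + 2^n := by ring
    rw [h2, Finset.sum_range_add]
    congr 1
    apply Finset.sum_congr rfl
    intro t _
    congr 1
    push_cast; ring

lemma per_dec {p : ℕ} {x} (h : Per (2*p) x) : Per p (dec x) := by
  intro i
  show x (2*(i+p)) = x (2*i)
  rw [show 2*(i+(p:ℤ)) = 2*i + ((2*p : ℕ) : ℤ) by push_cast; ring, h]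

lemma allOnes : ∀ b m p : ℕ, ∀ w : ℤ → ZMod 2, 2^b ≤ m → m < 2^(b+1) → 0 < p →
    Per p w → (∀ i, psiZ^[m] w i = 1) → 2^(b+1) ∣ p := by
  intro b
  induction b with
  | zero =>
    intro m p w h1 h2 hp hper hone
    have hm : m = 1 := by norm_num at h1 h2; omega
    subst hm
    simpa using two_dvd_per (m := 0) hp hper hone
  | succ b ih =>
    intro m p w h1 h2 hp hper hone
    have hm1 : 1 ≤ m := le_trans (Nat.one_le_two_pow) h1
    obtain ⟨m1, rfl⟩ := Nat.exists_eq_succ_of_ne_zero (by omega : m ≠ 0)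
    have h2dvd : 2 ∣ p := two_dvd_per hp hper hone
    obtain ⟨p', rfl⟩ := h2dvd
    set m' := (m1+1) / 2 with hm'
    set e := (m1+1) % 2 with he
    have hme : 2*m' + e = m1 + 1 := by omega
    set W := dec (psiZ^[e] w) with hW
    have hWper : Per p' W := per_dec (per_iter hper e)
    have hWone : ∀ i, psiZ^[m'] W i = 1 := by
      intro i
      rw [hW, decim, hme]
      exact hone _
    have hA := Nat.one_le_two_pow (n := b)
    have hb1 : 2^b ≤ m' := by
      have : (2:ℕ)^(b+1) = 2*2^b := by ring
      omega
    have hb2 : m' < 2^(b+1) := by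
      have : (2:ℕ)^(b+1+1) = 2*2^(b+1) := by ring
      omega
    have hp' : 0 < p' := by omega
    have := ih m' p' W hb1 hb2 hp' hWper hWone
    rw [show (2:ℕ)^(b+1+1) = 2*2^(b+1) by ring]
    exact mul_dvd_mul_left 2 this

lemma subword_eq (x : ℤ → ZMod 2) (i : ℤ) (k : ℕ) :
    subword x i k = (List.range k).map (fun t : ℕ => x (i + (t:ℤ))) := by
  show List.map (fun t : ℤ => x (i + t)) (@List.flatMap ℕ ℤ (fun a => [(a : ℤ)]) (List.range k)) = _
  have : (@List.flatMap ℕ ℤ (fun a => [(a : ℤ)]) (List.range k)) = (List.range k).map (fun a : ℕ => (a:ℤ)) := by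
    rw [← List.flatMap_pure_eq_map]
    rfl
  rw [this, List.map_map]
  rfl

lemma subword_succ (x : ℤ → ZMod 2) (i : ℤ) (k : ℕ) :
    subword x i (k+1) = x i :: subword x (i+1) k := by
  rw [subword_eq, subword_eq, List.range_succ_eq_map, List.map_cons, List.map_map]
  congr 1
  · simp
  · apply List.map_congr_left
    intro a _
    show x (i + ((a+1 : ℕ) : ℤ)) = x (i + 1 + a)
    congr 1
    push_cast; ring

lemma psiW_subword (k : ℕ) (x : ℤ → ZMod 2) (i : ℤ) :
    psiW (subword x i (k+1)) = subword (psiZ x) i k := by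
  induction k generalizing i with
  | zero =>
    rw [subword_succ]
    show psiW [x i] = subword (psiZ x) i 0
    simp [psiW, subword]
  | succ n ih =>
    rw [subword_succ, subword_succ]
    show (x i + x (i+1)) :: psiW (x (i+1) :: subword x (i+1+1) n) = subword (psiZ x) i (n+1)
    rw [← subword_succ, ih, subword_succ]
    rfl

lemma mem_F_iff (k : ℕ) (x : ℤ → ZMod 2) (i : ℤ) :
    subword x i (k+1) ∈ F (k+1) ↔ psiZ^[k] x i = 0 := by
  induction k generalizing x with
  | zero =>
    show subword x i 1 ∈ ({[(0:ZMod 2)]} : Set _) ↔ x i = 0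
    rw [subword_succ]
    simp [subword]
  | succ n ih =>
    show subword x i (n+2) ∈ psiW ⁻¹' F (n+1) ↔ _
    rw [Set.mem_preimage, psiW_subword, ih, Function.iterate_succ_apply]

lemma psiZ_shift (c : ℤ) (x : ℤ → ZMod 2) :
    psiZ (fun t => x (t + c)) = fun t => psiZ x (t + c) := by
  funext t
  show x (t + c) + x (t + 1 + c) = x (t + c) + x (t + c + 1)
  rw [show t + 1 + c = t + c + 1 by ring]

lemma iter_shift (m : ℕ) (c : ℤ) (x : ℤ → ZMod 2) (i : ℤ) :
    psiZ^[m] (fun t => x (t + c)) i = psiZ^[m] x (i + c) := by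
  induction m generalizing x i with
  | zero => rfl
  | succ n ih =>
    rw [Function.iterate_succ_apply, Function.iterate_succ_apply, psiZ_shift]
    exact ih (psiZ x) i

/-! ### Membership: construction of a sequence of period `2^(j+1)` in `X_k` -/

def delta (P : ℕ) : ℤ → ZMod 2 := fun i => if i % (P:ℤ) = 0 then 1 else 0

lemma per_delta (P : ℕ) : Per P (delta P) := by
  intro i
  unfold delta
  rw [show i + (P:ℤ) = i + (P:ℤ)*1 by ring, Int.add_mul_emod_self_left]

lemma window_delta (P : ℕ) (hP : 0 < P) (i : ℤ) :
    ∑ t ∈ Finset.range P, delta P (i + t) = 1 := by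
  have hPZ : (0:ℤ) < (P:ℤ) := by exact_mod_cast hP
  set z : ℤ := (-i) % (P:ℤ) with hz
  have hz0 : 0 ≤ z := Int.emod_nonneg _ hPZ.ne'
  have hzP : z < (P:ℤ) := Int.emod_lt_of_pos _ hPZ
  have hdvd : (P:ℤ) ∣ i + z := by
    have : z = -i - (P:ℤ) * ((-i) / (P:ℤ)) := by rw [hz, Int.emod_def]
    refine ⟨-((-i) / (P:ℤ)), by rw [this]; ring⟩
  set t0 : ℕ := z.toNat with ht0
  have ht0z : (t0 : ℤ) = z := Int.toNat_of_nonneg hz0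
  have key : ∀ t ∈ Finset.range P, delta P (i + t) = if t = t0 then 1 else 0 := by
    intro t ht
    rw [Finset.mem_range] at ht
    unfold delta
    congr 1
    rw [← Int.dvd_iff_emod_eq_zero]
    apply propext
    constructor
    · intro hd
      have hsub : (P:ℤ) ∣ ((t:ℤ) - z) := by
        have := dvd_sub hd hdvd
        simpa using this
      have habs : |(t:ℤ) - z| < (P:ℤ) := by
        rw [abs_lt]
        constructor <;> [linarith [(by exact_mod_cast Nat.zero_le t : (0:ℤ) ≤ (t:ℤ))]; skip]
        have : (t:ℤ) < (P:ℤ) := by exact_mod_cast ht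
        linarith
      have := Int.eq_zero_of_abs_lt_dvd hsub habs
      have : (t:ℤ) = z := by linarith
      rw [← ht0z] at this
      exact_mod_cast this
    · intro hd
      subst hd
      rw [ht0z]
      exact hdvd
  rw [Finset.sum_congr rfl key, Finset.sum_ite_eq' (Finset.range P) t0 (fun _ => (1:ZMod 2))]
  rw [if_pos]
  rw [Finset.mem_range]
  have : (t0:ℤ) < (P:ℤ) := by rw [ht0z]; exact hzP
  exact_mod_cast this

lemma mem_periodSet (k j : ℕ) (hk2 : 2 ≤ k) (hk : k ≤ 2^(j+1)) :
    2^(j+1) ∈ periodSet k := by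
  set P : ℕ := 2^(j+1) with hP
  have hP0 : 0 < P := Nat.pow_pos (by norm_num)
  refine ⟨hP0, psiZ^[P - k] (delta P), ?_, per_iter (per_delta P) (P - k)⟩
  obtain ⟨k', rfl⟩ := Nat.exists_eq_succ_of_ne_zero (by omega : k ≠ 0)
  refine ⟨0, by norm_num, ?_⟩
  intro i _
  rw [mem_F_iff]
  have h1 : psiZ^[k'] (psiZ^[P - (k'+1)] (delta P)) = psiZ^[P-1] (delta P) := by
    rw [← Function.iterate_add_apply]
    congr 1
    omega
  rw [h1, show P - 1 = 2^(j+1) - 1 from rfl, iter_window, window_delta P hP0]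
  decide

/-! ### Lower bound -/

lemma lower_bound (k j q : ℕ) (hj1 : 2^j + 1 ≤ k) (hj2 : k ≤ 2^(j+1))
    (hq : q ∈ periodSet k) : 2^(j+1) ∣ q := by
  obtain ⟨hq0, x, ⟨r, hr, hcond⟩, hper⟩ := hq
  have hk2 : 2 ≤ k := le_trans (by have := Nat.one_le_two_pow (n := j); omega) hj1
  obtain ⟨k', rfl⟩ := Nat.exists_eq_succ_of_ne_zero (by omega : k ≠ 0)
  have hk'1 : 1 ≤ k' := by omega
  have hper : Per q x := hper
  have h1 : ∀ i : ℤ, Even i → psiZ^[k'] x (i + r) = 1 := by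
    intro i hi
    have := hcond i hi
    rw [mem_F_iff] at this
    exact zmod2_eq_one this
  -- q is even
  have h2dvd : 2 ∣ q := by
    by_contra hodd
    have hoddq : Odd (q:ℤ) := by
      rw [Int.odd_coe_nat, Nat.odd_iff]
      omega
    have hall : ∀ n : ℤ, psiZ^[k'] x n = 1 := by
      intro n
      rcases Int.even_or_odd (n - r) with he | ho
      · have := h1 (n - r) he
        rwa [sub_add_cancel] at this
      · have he : Even (n + q - r) := by
          have : n + (q:ℤ) - r = (n - r) + q := by ring
          rw [this]
          exact ho.add_odd hoddq
        have := h1 (n + q - r) he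
        rw [sub_add_cancel] at this
        rwa [per_iter hper k' n] at this
    obtain ⟨k'', rfl⟩ := Nat.exists_eq_succ_of_ne_zero (by omega : k' ≠ 0)
    exact hodd (two_dvd_per hq0 hper hall)
  obtain ⟨q', rfl⟩ := h2dvd
  have hq0' : 0 < q' := by omega
  -- shift x by r
  set y : ℤ → ZMod 2 := fun t => x (t + r) with hy
  have hpery : Per (2*q') y := by
    intro i
    show x (i + ((2*q' : ℕ):ℤ) + r) = x (i + r)
    rw [show i + ((2*q' : ℕ):ℤ) + r = (i + r) + ((2*q' : ℕ):ℤ) by ring, hper]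
  have h2 : ∀ n : ℤ, psiZ^[k'] y (2*n) = 1 := by
    intro n
    rw [hy, iter_shift]
    exact h1 (2*n) (even_two_mul n)
  rcases Nat.eq_zero_or_pos j with rfl | hj0
  · -- j = 0 : goal 2^1 ∣ 2*q'
    norm_num
  obtain ⟨j', rfl⟩ := Nat.exists_eq_succ_of_ne_zero hj0.ne'
  set m' := k' / 2 with hm'
  set e := k' % 2 with he
  have hme : 2*m' + e = k' := by omega
  set W := dec (psiZ^[e] y) with hW
  have hWper : Per q' W := per_dec (per_iter hpery e)
  have hWone : ∀ i, psiZ^[m'] W i = 1 := by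
    intro i
    rw [hW, decim, hme]
    exact h2 i
  have hA := Nat.one_le_two_pow (n := j')
  have hb1 : 2^j' ≤ m' := by
    have h3 : (2:ℕ)^(j'+1) = 2*2^j' := by ring
    omega
  have hb2 : m' < 2^(j'+1) := by
    have h3 : (2:ℕ)^(j'+1+1) = 2*(2*2^j') := by ring
    have h4 : (2:ℕ)^(j'+1) = 2*2^j' := by ring
    omega
  have := allOnes j' m' q' W hb1 hb2 hq0' hWper hWone
  rw [show (2:ℕ)^(j'+1+1) = 2*2^(j'+1) by ring]
  exact mul_dvd_mul_left 2 this

/-- T_seq(X_1) = 1, and T_seq(X_k) = 2^{j+1} when 2^j + 1 ≤ k ≤ 2^{j+1}. -/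
theorem stmt_15 :
    IsLeast (periodSet 1) 1 ∧
    ∀ k : ℕ, 2 ≤ k → ∀ j : ℕ, 2 ^ j + 1 ≤ k → k ≤ 2 ^ (j + 1) →
      IsLeast (periodSet k) (2 ^ (j + 1)) := by
  constructor
  · constructor
    · refine ⟨Nat.one_pos, fun _ => 1, ⟨0, by norm_num, ?_⟩, fun i => rfl⟩
      intro i _
      rw [show (1:ℕ) = 0 + 1 from rfl, mem_F_iff]
      simp
    · intro q hq
      exact hq.1
  · intro k hk2 j hj1 hj2
    constructor
    · exact mem_periodSet k j hk2 hj2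
    · intro q hq
      have hd := lower_bound k j q hj1 hj2 hq
      exact Nat.le_of_dvd hq.1 hd
end
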